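/- Given the data of a potential SOACC C satisfying conditions (1), (2), and (4), the remaining condition (3) (the existence of the structure function ℓ expressing f ∘ c_S in terms of the c_{S'} modulo lower terms) is equivalent to the statement that C_{≤λ} is a two-sided ideal for all λ ∈ Λ. -/

import Mathlib

open CategoryTheory

universe w v u

/-- The data of a potential SOACC over `R`, satisfying conditions (1), (2) and (4)
but not necessarily condition (3). -/
structure PreSOACC (R : Type*) [CommRing R] where
  /-- the underlying category -/
  C : Type u
  [instCat : Category.{v} C]
  [instPre : Preadditive C]
  [instLin : Linear R C]
  /-- the cell poset -/
  Λ : Type w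
  [instPO : PartialOrder Λ]
  /-- descending chain condition -/
  dcc : WellFoundedLT Λ
  /-- the identification of `Λ` with a set of objects of `C` -/
  obj : Λ → C
  obj_inj : Function.Injective obj
  /-- the index sets `M(λ, X)` -/
  M : Λ → C → Type w
  /-- the index sets `E(X, λ)` -/
  E : C → Λ → Type w
  [instFinM : ∀ l X, Fintype (M l X)]
  [instFinE : ∀ X l, Fintype (E X l)]
  /-- the fixed bijection `ι : M(λ,X) ≃ E(X,λ)` -/
  bij : ∀ l X, M l X ≃ E X l
  /-- cellular structure morphisms `c_S : λ ⟶ X` -/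
  cM : ∀ {l X}, M l X → (obj l ⟶ X)
  /-- cellular structure morphisms `c_T : X ⟶ λ` -/
  cE : ∀ {X l}, E X l → (X ⟶ obj l)
  /-- axiom (1): the `c^λ_{S,T} = c_S ∘ c_T` are linearly independent ... -/
  basis_indep : ∀ X Y : C,
    LinearIndependent R (fun p : Σ l : Λ, E X l × M l Y => cE p.2.1 ≫ cM p.2.2)
  /-- ... and span `Hom(X,Y)` -/
  basis_span : ∀ X Y : C,
    Submodule.span R (Set.range (fun p : Σ l : Λ, E X l × M l Y => cE p.2.1 ≫ cM p.2.2)) = ⊤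
  /-- axiom (2): an `R`-linear contravariant involution ι -/
  invol : ∀ X Y : C, (X ⟶ Y) →ₗ[R] (Y ⟶ X)
  invol_comp : ∀ {X Y Z : C} (f : X ⟶ Y) (g : Y ⟶ Z),
    invol X Z (f ≫ g) = invol Y Z g ≫ invol X Y f
  invol_id : ∀ X : C, invol X X (𝟙 X) = 𝟙 X
  invol_invol : ∀ {X Y : C} (f : X ⟶ Y), invol Y X (invol X Y f) = f
  invol_cM : ∀ {l X} (S : M l X), invol (obj l) X (cM S) = cE (bij l X S)
  /-- axiom (4): `M(λ,λ)` is a single point `*` ... -/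
  ptM : ∀ l, M l (obj l)
  ptM_unique : ∀ l (S : M l (obj l)), S = ptM l
  ptE_unique : ∀ l (T : E (obj l) l), T = bij l (obj l) (ptM l)
  /-- ... with `c_* = 𝟙_λ` -/
  cM_pt : ∀ l, cM (ptM l) = 𝟙 (obj l)
  cE_pt : ∀ l, cE (bij l (obj l) (ptM l)) = 𝟙 (obj l)

attribute [instance] PreSOACC.instCat PreSOACC.instPre PreSOACC.instLin PreSOACC.instPO
  PreSOACC.instFinM PreSOACC.instFinE

variable {R : Type*} [CommRing R]

/-- The ideal `C_{≤λ}`: the `R`-span of the cellular basis elements in cells `≤ λ`. -/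
def PreSOACC.idealLE (S : PreSOACC R) (l : S.Λ) (X Y : S.C) : Submodule R (X ⟶ Y) :=
  Submodule.span R {h : X ⟶ Y | ∃ m : S.Λ, m ≤ l ∧
    ∃ (T : S.E X m) (S' : S.M m Y), h = S.cE T ≫ S.cM S'}

/-- The ideal `C_{<λ}`. -/
def PreSOACC.idealLT (S : PreSOACC R) (l : S.Λ) (X Y : S.C) : Submodule R (X ⟶ Y) :=
  Submodule.span R {h : X ⟶ Y | ∃ m : S.Λ, m < l ∧
    ∃ (T : S.E X m) (S' : S.M m Y), h = S.cE T ≫ S.cM S'}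

namespace PreSOACC

variable (S : PreSOACC R)

/-- The cellular basis of `Hom(X,Y)`. -/
noncomputable def basis (X Y : S.C) :
    Module.Basis (Σ l : S.Λ, S.E X l × S.M l Y) R (X ⟶ Y) :=
  Module.Basis.mk (S.basis_indep X Y) (by rw [S.basis_span X Y])

lemma basis_apply (X Y : S.C) (p : Σ l : S.Λ, S.E X l × S.M l Y) :
    S.basis X Y p = S.cE p.2.1 ≫ S.cM p.2.2 :=
  Module.Basis.mk_apply _ _ _

lemma idealLE_eq (l : S.Λ) (X Y : S.C) :
    S.idealLE l X Y = Submodule.span R (S.basis X Y '' {p | p.1 ≤ l}) := by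
  unfold idealLE
  congr 1
  ext h
  constructor
  · rintro ⟨m, hm, T, S', rfl⟩
    exact ⟨⟨m, T, S'⟩, hm, S.basis_apply X Y ⟨m, T, S'⟩⟩
  · rintro ⟨⟨m, T, S'⟩, hm, rfl⟩
    exact ⟨m, hm, T, S', S.basis_apply X Y ⟨m, T, S'⟩⟩

lemma idealLT_eq (l : S.Λ) (X Y : S.C) :
    S.idealLT l X Y = Submodule.span R (S.basis X Y '' {p | p.1 < l}) := by
  unfold idealLT
  congr 1
  ext h
  constructor
  · rintro ⟨m, hm, T, S', rfl⟩
    exact ⟨⟨m, T, S'⟩, hm, S.basis_apply X Y ⟨m, T, S'⟩⟩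
  · rintro ⟨⟨m, T, S'⟩, hm, rfl⟩
    exact ⟨m, hm, T, S', S.basis_apply X Y ⟨m, T, S'⟩⟩

lemma gen_mem_idealLE {l m : S.Λ} (hm : m ≤ l) {X Y : S.C} (T : S.E X m) (S' : S.M m Y) :
    S.cE T ≫ S.cM S' ∈ S.idealLE l X Y :=
  Submodule.subset_span ⟨m, hm, T, S', rfl⟩

lemma cM_mem_idealLE (l : S.Λ) {Y : S.C} (s : S.M l Y) :
    S.cM s ∈ S.idealLE l (S.obj l) Y := by
  have : S.cM s = S.cE (S.bij l (S.obj l) (S.ptM l)) ≫ S.cM s := by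
    rw [S.cE_pt, Category.id_comp]
  rw [this]
  exact S.gen_mem_idealLE le_rfl _ _

lemma idealLE_mono {l m : S.Λ} (h : m ≤ l) (X Y : S.C) :
    S.idealLE m X Y ≤ S.idealLE l X Y := by
  apply Submodule.span_le.2
  rintro _ ⟨m', hm', T, S', rfl⟩
  exact S.gen_mem_idealLE (hm'.trans h) T S'

lemma invol_cE {m : S.Λ} {X : S.C} (T : S.E X m) :
    S.invol X (S.obj m) (S.cE T) = S.cM ((S.bij m X).symm T) := by
  conv_lhs => rw [show S.cE T = S.cE (S.bij m X ((S.bij m X).symm T)) by rw [Equiv.apply_symm_apply]]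
  rw [← S.invol_cM, S.invol_invol]

lemma invol_mem_idealLE {l : S.Λ} {X Y : S.C} {f : X ⟶ Y} (hf : f ∈ S.idealLE l X Y) :
    S.invol X Y f ∈ S.idealLE l Y X := by
  have key : S.idealLE l X Y ≤ (S.idealLE l Y X).comap (S.invol X Y) := by
    refine Submodule.span_le.2 ?_
    rintro _ ⟨m, hm, T, S', rfl⟩
    simp only [Set.mem_setOf_eq, SetLike.mem_coe, Submodule.mem_comap]
    rw [S.invol_comp, S.invol_cM, S.invol_cE]
    exact S.gen_mem_idealLE hm _ _
  exact key hf

/-- Mod-out characterization of ideal membership via the cellular basis. -/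
lemma mem_idealLE_iff (l : S.Λ) {X Y : S.C} (h : X ⟶ Y) :
    h ∈ S.idealLE l X Y ↔ ∀ p, ¬ p.1 ≤ l → (S.basis X Y).repr h p = 0 := by
  rw [S.idealLE_eq, Module.Basis.mem_span_image, Finsupp.support_subset_iff]
  simp only [Set.mem_setOf_eq]

lemma mem_idealLT_iff (l : S.Λ) {X Y : S.C} (h : X ⟶ Y) :
    h ∈ S.idealLT l X Y ↔ ∀ p, ¬ p.1 < l → (S.basis X Y).repr h p = 0 := by
  rw [S.idealLT_eq, Module.Basis.mem_span_image, Finsupp.support_subset_iff]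
  simp only [Set.mem_setOf_eq]

end PreSOACC

namespace PreSOACC

variable (S : PreSOACC R)

lemma basis_pt (l : S.Λ) {Z : S.C} (s' : S.M l Z) :
    S.basis (S.obj l) Z ⟨l, S.bij l (S.obj l) (S.ptM l), s'⟩ = S.cM s' := by
  rw [S.basis_apply, S.cE_pt, Category.id_comp]

lemma ideal_of_ell
    (ell : ∀ (l : S.Λ) (Y Z : S.C), (Y ⟶ Z) → S.M l Y → S.M l Z → R)
    (hell : ∀ (l : S.Λ) (Y Z : S.C) (f : Y ⟶ Z) (s : S.M l Y),
      S.cM s ≫ f - ∑ s' : S.M l Z, ell l Y Z f s s' • S.cM s' ∈ S.idealLT l (S.obj l) Z)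
    (l : S.Λ) :
    (∀ (X Y Z : S.C) (f : X ⟶ Y) (g : Y ⟶ Z),
        f ∈ S.idealLE l X Y → f ≫ g ∈ S.idealLE l X Z) ∧
      (∀ (W X Y : S.C) (f : X ⟶ Y) (h : W ⟶ X),
        f ∈ S.idealLE l X Y → h ≫ f ∈ S.idealLE l W Y) := by
  haveI := S.dcc
  induction l using WellFoundedLT.induction with
  | _ l ih =>
  have right : ∀ (X Y Z : S.C) (f : X ⟶ Y) (g : Y ⟶ Z),
      f ∈ S.idealLE l X Y → f ≫ g ∈ S.idealLE l X Z := by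
    intro X Y Z f g hf
    have key : S.idealLE l X Y ≤ (S.idealLE l X Z).comap (Linear.rightComp R X g) := by
      refine Submodule.span_le.2 ?_
      rintro _ ⟨m, hm, T, S', rfl⟩
      simp only [Set.mem_setOf_eq, SetLike.mem_coe, Submodule.mem_comap,
        Linear.rightComp_apply]
      rw [Category.assoc]
      have hdecomp := hell m Y Z g S'
      set r := S.cM S' ≫ g - ∑ s' : S.M m Z, ell m Y Z g S' s' • S.cM s' with hr
      have hsplit : S.cM S' ≫ g = (∑ s' : S.M m Z, ell m Y Z g S' s' • S.cM s') + r := by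
        rw [hr]; abel
      rw [hsplit,
        show S.cE T ≫ ((∑ s' : S.M m Z, ell m Y Z g S' s' • S.cM s') + r)
          = (Linear.leftComp R Z (S.cE T)) ((∑ s' : S.M m Z, ell m Y Z g S' s' • S.cM s') + r)
          from rfl, map_add]
      apply Submodule.add_mem
      · rw [map_sum]
        refine Submodule.sum_mem _ fun s' _ => ?_
        rw [map_smul]
        refine Submodule.smul_mem _ _ ?_
        simpa only [Linear.leftComp_apply] using S.gen_mem_idealLE hm T s'
      · have hlt : S.idealLT m (S.obj m) Z ≤
            (S.idealLE l X Z).comap (Linear.leftComp R Z (S.cE T)) := by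
          refine Submodule.span_le.2 ?_
          rintro _ ⟨m', hm', T', S'', rfl⟩
          simp only [Set.mem_setOf_eq, SetLike.mem_coe, Submodule.mem_comap,
            Linear.leftComp_apply]
          have hgen : S.cE T' ≫ S.cM S'' ∈ S.idealLE m' (S.obj m) Z :=
            S.gen_mem_idealLE le_rfl T' S''
          have hm'l : m' < l := lt_of_lt_of_le hm' hm
          exact S.idealLE_mono hm'l.le X Z
            ((ih m' hm'l).2 X (S.obj m) Z (S.cE T' ≫ S.cM S'') (S.cE T) hgen)
        exact hlt hdecomp
    exact key hf
  refine ⟨right, ?_⟩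
  intro W X Y f h hf
  have h2 : S.invol X Y f ≫ S.invol W X h ∈ S.idealLE l Y W :=
    right Y X W _ _ (S.invol_mem_idealLE hf)
  have h3 := S.invol_mem_idealLE h2
  rwa [← S.invol_comp, S.invol_invol] at h3

end PreSOACC

/-- Given the data of a potential SOACC satisfying conditions (1), (2) and (4),
the remaining condition (3) — the existence of the structure function `ℓ` expressing
`f ∘ c_S` in terms of the `c_{S'}` modulo lower terms — is equivalent to the statement that
`C_{≤λ}` is a two-sided ideal for all `λ ∈ Λ`. -/
theorem PreSOACC.condition3_iff_ideal (S : PreSOACC R) :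
    (∃ ell : ∀ (l : S.Λ) (Y Z : S.C), (Y ⟶ Z) → S.M l Y → S.M l Z → R,
      ∀ (l : S.Λ) (Y Z : S.C) (f : Y ⟶ Z) (s : S.M l Y),
        S.cM s ≫ f - ∑ s' : S.M l Z, ell l Y Z f s s' • S.cM s' ∈
          S.idealLT l (S.obj l) Z) ↔
    (∀ l : S.Λ,
      (∀ (X Y Z : S.C) (f : X ⟶ Y) (g : Y ⟶ Z),
        f ∈ S.idealLE l X Y → f ≫ g ∈ S.idealLE l X Z) ∧
      (∀ (W X Y : S.C) (f : X ⟶ Y) (h : W ⟶ X),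
        f ∈ S.idealLE l X Y → h ≫ f ∈ S.idealLE l W Y)) := by
  constructor
  · rintro ⟨ell, hell⟩ l
    exact S.ideal_of_ell ell hell l
  · intro H
    refine ⟨fun l Y Z f s s' =>
      (S.basis (S.obj l) Z).repr (S.cM s ≫ f) ⟨l, S.bij l (S.obj l) (S.ptM l), s'⟩, ?_⟩
    intro l Y Z f s
    classical
    have hmem : S.cM s ≫ f ∈ S.idealLE l (S.obj l) Z :=
      (H l).1 (S.obj l) Y Z (S.cM s) f (S.cM_mem_idealLE l s)
    rw [S.mem_idealLT_iff]
    intro p hp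
    rw [map_sub, map_sum, Finsupp.sub_apply, Finsupp.finset_sum_apply]
    simp only [map_smul, Finsupp.smul_apply]
    by_cases hle : p.1 ≤ l
    · have hpl : p.1 = l := by
        rcases lt_or_eq_of_le hle with h | h
        · exact absurd h hp
        · exact h
      obtain ⟨m, T, s0⟩ := p
      dsimp only at hpl
      subst hpl
      have hT : T = S.bij m (S.obj m) (S.ptM m) := S.ptE_unique m T
      subst hT
      rw [Finset.sum_eq_single s0]
      · rw [← S.basis_pt m s0, Module.Basis.repr_self, Finsupp.single_eq_same, smul_eq_mul,
          mul_one, sub_self]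
      · intro s' _ hs'
        rw [← S.basis_pt m s', Module.Basis.repr_self, Finsupp.single_apply, if_neg, smul_zero]
        intro h
        apply hs'
        simp only [Sigma.mk.inj_iff, heq_eq_eq, Prod.mk.injEq, true_and] at h
        exact h
      · intro h; exact absurd (Finset.mem_univ s0) h
    · rw [(S.mem_idealLE_iff l _).1 hmem p hle, Finset.sum_eq_zero, sub_zero]
      intro s' _
      rw [← S.basis_pt l s', Module.Basis.repr_self, Finsupp.single_apply, if_neg, smul_zero]
      exact fun h => hle (h ▸ le_rfl)
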